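/- Assume h satisfies the stability property and the pair (h,h°) satisfies the Combinatorial Duality Property (on all of ℕ^s). Then for every ℓ ∈ ℕ^s one has the coefficientwise identity Σ_{I ⊆ {1,…,s}} (−1)^{|I|+1} · max{w(ℓ+E_{I'}) : I' ⊆ I} = Σ_{I ⊆ {1,…,s}} (−1)^{|I|+1} · h(ℓ+E_I). -/

import Mathlib

open Finset

/-- `cubeEN I` is the lattice vector `E_I = ∑_{v ∈ I} E_v` in `ℕ^s`. -/
def cubeEN {s : ℕ} (I : Finset (Fin s)) : Fin s → ℕ := fun v => if v ∈ I then 1 else 0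

lemma cubeEN_empty {s : ℕ} : (cubeEN (∅ : Finset (Fin s))) = 0 := by
  funext w; simp [cubeEN]

lemma cubeEN_insert {s : ℕ} {v : Fin s} {K : Finset (Fin s)} (hv : v ∉ K) :
    cubeEN (insert v K) = cubeEN K + cubeEN {v} := by
  funext w
  by_cases hw : w = v
  · subst hw; simp [cubeEN, hv]
  · simp [cubeEN, hw, Finset.mem_insert]

lemma cubeEN_sdiff {s : ℕ} {I' J : Finset (Fin s)} (hIJ : I' ⊆ J) :
    cubeEN I' + cubeEN (J \ I') = cubeEN J := by
  funext w
  by_cases hw : w ∈ I'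
  · simp [cubeEN, hw, hIJ hw, Finset.mem_sdiff]
  · by_cases hw2 : w ∈ J <;> simp [cubeEN, hw, hw2, Finset.mem_sdiff]

lemma cubeEN_apply_not_mem {s : ℕ} {v : Fin s} {K : Finset (Fin s)} (hv : v ∉ K) :
    cubeEN K v = 0 := by simp [cubeEN, hv]

section aux

variable {s : ℕ} (h h0 : (Fin s → ℕ) → ℤ)

lemma mono_many (h_mono : ∀ (ℓ : Fin s → ℕ) (v : Fin s), h ℓ ≤ h (ℓ + cubeEN {v}))
    (K : Finset (Fin s)) : ∀ ℓ : Fin s → ℕ, h ℓ ≤ h (ℓ + cubeEN K) := by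
  classical
  induction K using Finset.induction_on with
  | empty => intro ℓ; simp [cubeEN_empty]
  | insert _ _ hv ih =>
      intro ℓ
      rw [cubeEN_insert hv, ← add_assoc]
      exact (ih ℓ).trans (h_mono _ _)

lemma anti_many (h0_anti : ∀ (ℓ : Fin s → ℕ) (v : Fin s), h0 (ℓ + cubeEN {v}) ≤ h0 ℓ)
    (K : Finset (Fin s)) : ∀ ℓ : Fin s → ℕ, h0 (ℓ + cubeEN K) ≤ h0 ℓ := by
  classical
  induction K using Finset.induction_on with
  | empty => intro ℓ; simp [cubeEN_empty]
  | insert _ _ hv ih =>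
      intro ℓ
      rw [cubeEN_insert hv, ← add_assoc]
      exact (h0_anti _ _).trans (ih ℓ)

lemma stab_many (h_mono : ∀ (ℓ : Fin s → ℕ) (v : Fin s), h ℓ ≤ h (ℓ + cubeEN {v}))
    (h_stab : ∀ (ℓ ℓbar : Fin s → ℕ) (v : Fin s), ℓbar v = 0 →
      h ℓ = h (ℓ + cubeEN {v}) → h (ℓ + ℓbar) = h (ℓ + ℓbar + cubeEN {v}))
    (K : Finset (Fin s)) : ∀ (p : Fin s → ℕ) (v : Fin s), v ∉ K →
      h p = h (p + cubeEN K) → h (p + cubeEN {v}) = h (p + cubeEN {v} + cubeEN K) := by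
  classical
  induction K using Finset.induction_on with
  | empty => intro p v _ _; simp [cubeEN_empty]
  | @insert u K hu ih =>
      intro p v hv hK
      have hvu : v ≠ u := fun hvu => hv (by rw [hvu]; exact Finset.mem_insert_self u K)
      have hvK : v ∉ K := fun hvK => hv (Finset.mem_insert_of_mem hvK)
      rw [cubeEN_insert hu, ← add_assoc] at hK
      -- split the equality into two
      have h1 : h p ≤ h (p + cubeEN K) := mono_many h h_mono K p
      have h2 : h (p + cubeEN K) ≤ h (p + cubeEN K + cubeEN {u}) := h_mono _ _
      have e1 : h p = h (p + cubeEN K) := le_antisymm h1 (by rw [hK]; exact h2)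
      have e2 : h (p + cubeEN K) = h (p + cubeEN K + cubeEN {u}) := by
        rw [← e1, hK]
      have ihv : h (p + cubeEN {v}) = h (p + cubeEN {v} + cubeEN K) := ih p v hvK e1
      have stab := h_stab (p + cubeEN K) (cubeEN {v}) u
        (by simp [cubeEN, hvu.symm]) e2
      rw [cubeEN_insert hu, ← add_assoc, ihv]
      calc h (p + cubeEN {v} + cubeEN K) = h (p + cubeEN K + cubeEN {v}) := by
            rw [add_right_comm]
        _ = h (p + cubeEN K + cubeEN {v} + cubeEN {u}) := stab
        _ = h (p + cubeEN {v} + cubeEN K + cubeEN {u}) := by rw [add_right_comm p]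

lemma exists_witness
    (h_mono : ∀ (ℓ : Fin s → ℕ) (v : Fin s), h ℓ ≤ h (ℓ + cubeEN {v}))
    (h_stab : ∀ (ℓ ℓbar : Fin s → ℕ) (v : Fin s), ℓbar v = 0 →
      h ℓ = h (ℓ + cubeEN {v}) → h (ℓ + ℓbar) = h (ℓ + ℓbar + cubeEN {v}))
    (h_cdp : ∀ (ℓ : Fin s → ℕ) (v : Fin s),
      h (ℓ + cubeEN {v}) - h ℓ = 0 ∨ h0 (ℓ + cubeEN {v}) - h0 ℓ = 0)
    (I : Finset (Fin s)) : ∀ ℓ : Fin s → ℕ, ∃ I' ⊆ I,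
      h (ℓ + cubeEN I') = h (ℓ + cubeEN I) ∧ h0 (ℓ + cubeEN I') = h0 ℓ := by
  classical
  induction I using Finset.induction_on with
  | empty => intro ℓ; exact ⟨∅, Finset.Subset.refl _, rfl, by simp [cubeEN_empty]⟩
  | @insert v J hv ih =>
      intro ℓ
      obtain ⟨I', hI'J, hh, hh0⟩ := ih ℓ
      set p := ℓ + cubeEN I' with hp
      have hvd : v ∉ J \ I' := fun hm => hv (Finset.mem_sdiff.mp hm).1
      have hJsplit : ℓ + cubeEN J = p + cubeEN (J \ I') := by
        rw [hp, add_assoc, cubeEN_sdiff hI'J]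
      have hpK : h p = h (p + cubeEN (J \ I')) := by rw [← hJsplit]; exact hh
      rcases h_cdp p v with hc | hc
      · -- h unchanged at p: keep I'
        refine ⟨I', hI'J.trans (Finset.subset_insert v J), ?_, hh0⟩
        have hpv : h p = h (p + cubeEN {v}) := by omega
        have := h_stab p (cubeEN (J \ I')) v (cubeEN_apply_not_mem hvd) hpv
        rw [cubeEN_insert hv, ← add_assoc, hJsplit, ← this, ← hpK]
      · -- h0 unchanged at p: add v to I'
        have hvI' : v ∉ I' := fun hm => hv (hI'J hm)
        refine ⟨insert v I', Finset.insert_subset_insert v hI'J, ?_, ?_⟩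
        · have key := stab_many h h_mono h_stab (J \ I') p v hvd hpK
          rw [cubeEN_insert hv, cubeEN_insert hvI', ← add_assoc, ← add_assoc, hJsplit]
          show h (p + cubeEN {v}) = h (p + cubeEN (J \ I') + cubeEN {v})
          rw [key, add_right_comm]
        · rw [cubeEN_insert hvI', ← add_assoc, ← hp]
          omega

end aux

/-- if `h` satisfies the stability property and `(h, h°)` satisfies the
Combinatorial Duality Property on all of `ℕ^s`, then for every `ℓ ∈ ℕ^s`,
`Σ_{I ⊆ {1,…,s}} (−1)^{|I|+1} · max{w(ℓ+E_{I'}) : I' ⊆ I}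
  = Σ_{I ⊆ {1,…,s}} (−1)^{|I|+1} · h(ℓ+E_I)`. -/
theorem statement5 {s : ℕ} (hs : 1 ≤ s)
    (h h0 : (Fin s → ℕ) → ℤ)
    (h_zero : h 0 = 0)
    (h_mono : ∀ (ℓ : Fin s → ℕ) (v : Fin s), h ℓ ≤ h (ℓ + cubeEN {v}))
    (h0_anti : ∀ (ℓ : Fin s → ℕ) (v : Fin s), h0 (ℓ + cubeEN {v}) ≤ h0 ℓ)
    (h_stab : ∀ (ℓ ℓbar : Fin s → ℕ) (v : Fin s), ℓbar v = 0 →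
      h ℓ = h (ℓ + cubeEN {v}) → h (ℓ + ℓbar) = h (ℓ + ℓbar + cubeEN {v}))
    (h_cdp : ∀ (ℓ : Fin s → ℕ) (v : Fin s),
      h (ℓ + cubeEN {v}) - h ℓ = 0 ∨ h0 (ℓ + cubeEN {v}) - h0 ℓ = 0) :
    ∀ ℓ : Fin s → ℕ,
      ∑ I ∈ (Finset.univ : Finset (Fin s)).powerset,
        (-1 : ℤ) ^ (I.card + 1) *
          I.powerset.sup' (Finset.powerset_nonempty I)
            (fun I' => h (ℓ + cubeEN I') + h0 (ℓ + cubeEN I') - h0 0)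
      = ∑ I ∈ (Finset.univ : Finset (Fin s)).powerset,
          (-1 : ℤ) ^ (I.card + 1) * h (ℓ + cubeEN I) := by
  intro ℓ
  have key : ∀ I : Finset (Fin s),
      I.powerset.sup' (Finset.powerset_nonempty I)
        (fun I' => h (ℓ + cubeEN I') + h0 (ℓ + cubeEN I') - h0 0)
      = h (ℓ + cubeEN I) + (h0 ℓ - h0 0) := by
    intro I
    apply le_antisymm
    · apply Finset.sup'_le
      intro I' hI'
      rw [Finset.mem_powerset] at hI'
      have h1 : h (ℓ + cubeEN I') ≤ h (ℓ + cubeEN I) := by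
        have := mono_many h h_mono (I \ I') (ℓ + cubeEN I')
        rwa [add_assoc, cubeEN_sdiff hI'] at this
      have h2 : h0 (ℓ + cubeEN I') ≤ h0 ℓ := anti_many h0 h0_anti I' ℓ
      omega
    · obtain ⟨I', hI'I, hh, hh0⟩ := exists_witness h h0 h_mono h_stab h_cdp I ℓ
      have := Finset.le_sup' (f := fun I' => h (ℓ + cubeEN I') + h0 (ℓ + cubeEN I') - h0 0)
        (Finset.mem_powerset.mpr hI'I)
      rw [hh, hh0] at this
      convert this using 1
      ring
  rw [Finset.sum_congr rfl (fun I _ => by rw [key I])]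
  have hzero : ∑ I ∈ (Finset.univ : Finset (Fin s)).powerset,
      (-1 : ℤ) ^ (I.card + 1) * (h0 ℓ - h0 0) = 0 := by
    rw [← Finset.sum_mul]
    have : ∑ I ∈ (Finset.univ : Finset (Fin s)).powerset, (-1 : ℤ) ^ (I.card + 1)
        = -∑ I ∈ (Finset.univ : Finset (Fin s)).powerset, (-1 : ℤ) ^ I.card := by
      rw [← Finset.sum_neg_distrib]
      exact Finset.sum_congr rfl fun I _ => by ring
    rw [this, Finset.sum_powerset_neg_one_pow_card_of_nonempty
      (Finset.univ_nonempty_iff.mpr (Fin.pos_iff_nonempty.mp hs)), neg_zero, zero_mul]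
  calc ∑ I ∈ (Finset.univ : Finset (Fin s)).powerset,
        (-1 : ℤ) ^ (I.card + 1) * (h (ℓ + cubeEN I) + (h0 ℓ - h0 0))
      = (∑ I ∈ (Finset.univ : Finset (Fin s)).powerset,
          (-1 : ℤ) ^ (I.card + 1) * h (ℓ + cubeEN I))
        + ∑ I ∈ (Finset.univ : Finset (Fin s)).powerset,
          (-1 : ℤ) ^ (I.card + 1) * (h0 ℓ - h0 0) := by
        rw [← Finset.sum_add_distrib]
        exact Finset.sum_congr rfl fun I _ => by ring
    _ = _ := by rw [hzero, add_zero]
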